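/- If X ⊆ T_n is nonempty and dominant with respect to a nonempty C ⊆ I, then 0 ≤ x_i − m_i < d/n for every x ∈ X and every i ∈ I, where m ∈ ℝ^d is the point with coordinates m_i = (min_i X)_i for i ∈ C and m_i = 0 for i ∉ C. -/

import Mathlib

/-- The lattice points of the standard `(d-1)`-simplex with denominator `n`:
points of `Δ^{d-1}` all of whose coordinates are multiples of `1/n`. -/
abbrev LatticePt (d n : ℕ) : Type :=
  {x : Fin d → ℝ // (∀ i, 0 ≤ x i) ∧ (∑ i, x i = 1) ∧ ∀ i, ∃ k : ℤ, x i = (k : ℝ) / n}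

/-- If `X ⊆ T_n` is nonempty and dominant with respect to a nonempty `C ⊆ I`,
then `0 ≤ x_i − m_i < d/n` for every `x ∈ X` and every `i ∈ I`, where
`m_i = (min_i X)_i` for `i ∈ C` and `m_i = 0` otherwise. -/
theorem stmt14 (d n : ℕ) (hd : 1 ≤ d) (hn : 1 ≤ n)
    (o : Fin d → LinearOrder (LatticePt d n))
    (ho : ∀ (i : Fin d) (x y : LatticePt d n), x.1 i < y.1 i → (o i).lt x y)
    (X : Finset (LatticePt d n)) (hX : X.Nonempty)
    (C : Finset (Fin d)) (hC : C.Nonempty)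
    (hdom : ¬ ∃ y : LatticePt d n, ∀ i ∈ C, (o i).lt (@Finset.min' _ (o i) X hX) y) :
    ∀ x ∈ X, ∀ i : Fin d,
      0 ≤ x.1 i - (if i ∈ C then (@Finset.min' _ (o i) X hX).1 i else 0) ∧
      x.1 i - (if i ∈ C then (@Finset.min' _ (o i) X hX).1 i else 0) < (d : ℝ) / n := by
  have hn0 : (0:ℝ) < n := by exact_mod_cast hn
  have hlow : ∀ x ∈ X, ∀ j : Fin d, (@Finset.min' _ (o j) X hX).1 j ≤ x.1 j := by
    intro x hx j
    by_contra h
    push_neg at h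
    have h1 : (o j).lt x (@Finset.min' _ (o j) X hX) := ho j x _ h
    have h2 := @Finset.min'_le _ (o j) X x hx
    exact (((o j).lt_iff_le_not_ge _ _).mp h1).2 h2
  intro x hx i
  constructor
  · split_ifs with hi
    · linarith [hlow x hx i]
    · linarith [x.2.1 i]
  · by_contra hcon
    push_neg at hcon
    -- hcon : d/n ≤ x.1 i - (if ...)
    -- Step 1: sum of minima over C is ≤ 1 - d/n
    set M : Fin d → LatticePt d n := fun j => @Finset.min' _ (o j) X hX with hM
    have hMle : ∀ j : Fin d, (M j).1 j ≤ x.1 j := fun j => hlow x hx j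
    have hsubC : ∑ j ∈ C, x.1 j ≤ 1 := by
      have h := Finset.sum_le_sum_of_subset_of_nonneg (Finset.subset_univ C)
        (fun j _ _ => x.2.1 j)
      linarith [x.2.2.1]
    have hkey : ∑ j ∈ C, (M j).1 j + (d:ℝ)/n ≤ 1 := by
      by_cases hi : i ∈ C
      · rw [if_pos hi] at hcon
        have h1 : ∑ j ∈ C, (M j).1 j = (M i).1 i + ∑ j ∈ C.erase i, (M j).1 j :=
          (Finset.add_sum_erase C (fun j => (M j).1 j) hi).symm
        have h2 : ∑ j ∈ C.erase i, (M j).1 j ≤ ∑ j ∈ C.erase i, x.1 j :=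
          Finset.sum_le_sum (fun j _ => hMle j)
        have h3 : x.1 i + ∑ j ∈ C.erase i, x.1 j = ∑ j ∈ C, x.1 j :=
          Finset.add_sum_erase C (fun j => x.1 j) hi
        linarith
      · rw [if_neg hi] at hcon
        have h2 : ∑ j ∈ C, (M j).1 j ≤ ∑ j ∈ C, x.1 j :=
          Finset.sum_le_sum (fun j _ => hMle j)
        have h3 : x.1 i + ∑ j ∈ C, x.1 j = ∑ j ∈ insert i C, x.1 j :=
          (Finset.sum_insert (by simpa using hi)).symm
        have h4 : ∑ j ∈ insert i C, x.1 j ≤ 1 := by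
          have h := Finset.sum_le_sum_of_subset_of_nonneg (Finset.subset_univ (insert i C))
            (fun j _ _ => x.2.1 j)
          linarith [x.2.2.1]
        linarith
    -- Step 2: construct the dominating point y
    set S : ℝ := 1 - ∑ j ∈ C, (M j).1 j - C.card / n with hS
    have hcard : (C.card : ℝ) ≤ d := by
      exact_mod_cast (C.card_le_univ).trans_eq (by simp)
    have hS0 : 0 ≤ S := by
      have h : (C.card : ℝ)/n ≤ (d:ℝ)/n := by gcongr
      simp only [hS]
      linarith [hkey]
    obtain ⟨c₀, hc₀⟩ := hC
    set yf : Fin d → ℝ :=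
      fun j => if j ∈ C then (M j).1 j + 1/n + (if j = c₀ then S else 0) else 0 with hyf
    have hynn : ∀ j, 0 ≤ yf j := by
      intro j
      simp only [hyf]
      split_ifs with h1 h2
      · have := (M j).2.1 j; positivity
      · have := (M j).2.1 j; positivity
      · exact le_rfl
    have hysum : ∑ j, yf j = 1 := by
      have h0 : ∑ j, yf j = ∑ j ∈ C, yf j := by
        refine (Finset.sum_subset (Finset.subset_univ C) ?_).symm
        intro j _ hj
        simp [hyf, hj]
      rw [h0]
      have h1 : ∑ j ∈ C, yf j
          = ∑ j ∈ C, ((M j).1 j + 1/n + (if j = c₀ then S else 0)) := by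
        apply Finset.sum_congr rfl
        intro j hj
        simp [hyf, hj]
      rw [h1, Finset.sum_add_distrib, Finset.sum_add_distrib,
        Finset.sum_ite_eq' C c₀ (fun _ => S), if_pos hc₀, Finset.sum_const,
        nsmul_eq_mul]
      simp only [hS]
      ring
    have hyint : ∀ j, ∃ k : ℤ, yf j = (k:ℝ)/n := by
      intro j
      by_cases hj : j ∈ C
      · obtain ⟨k, hk⟩ := (M j).2.2.2 j
        by_cases hjc : j = c₀
        · -- need S as integer/n
          have hsumint : ∃ K : ℤ, ∑ l ∈ C, (M l).1 l = (K:ℝ)/n := by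
            classical
            refine ⟨∑ l ∈ C, ((M l).2.2.2 l).choose, ?_⟩
            push_cast
            rw [Finset.sum_div]
            exact Finset.sum_congr rfl (fun l _ => ((M l).2.2.2 l).choose_spec)
          obtain ⟨K, hK⟩ := hsumint
          subst hjc
          refine ⟨k + 1 + (n - K - C.card), ?_⟩
          simp only [hyf, if_pos hj, if_pos rfl, hS, hK, hk]
          push_cast
          field_simp
        · exact ⟨k + 1, by simp [hyf, hj, hjc, hk]; push_cast; field_simp⟩
      · exact ⟨0, by simp [hyf, hj]⟩
    have hMeq : ∀ j, M j = @Finset.min' _ (o j) X hX := fun j => rfl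
    clear_value M S yf
    have hylt : ∀ j ∈ C, (M j).1 j < yf j := by
      intro j hj
      simp only [hyf, if_pos hj]
      have h1 : (0:ℝ) < 1/n := by positivity
      have h2 : (0:ℝ) ≤ S := hS0
      split_ifs <;> linarith [h1, h2]
    refine hdom ⟨⟨yf, hynn, hysum, hyint⟩, fun j hj => ho j _ _ ?_⟩
    rw [← hMeq j]
    exact hylt j hj
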